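/- Every connected local tournament contains a Hamiltonian directed path. -/

import Mathlib

/-- A local tournament: a loopless digraph in which, for every vertex `v`, both the
out-neighborhood and the in-neighborhood of `v` induce tournaments. -/
def IsLocalTournament {V : Type*} (A : V → V → Prop) : Prop :=
  (∀ v, ¬ A v v) ∧
  (∀ v x y : V, A v x → A v y → x ≠ y → (A x y ↔ ¬ A y x)) ∧
  (∀ v x y : V, A x v → A y v → x ≠ y → (A x y ↔ ¬ A y x))

/-- The underlying undirected graph is connected. -/
def UConnected {V : Type*} (A : V → V → Prop) : Prop :=
  ∀ u v : V, Relation.ReflTransGen (fun a b => A a b ∨ A b a) u v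

open List

/-- Insertion into a path starting at `a`, when `A a w`. -/
lemma fwd_insert {V : Type*} (A : V → V → Prop)
    (h2 : ∀ v x y : V, A v x → A v y → x ≠ y → (A x y ∨ A y x)) (w : V) :
    ∀ (l : List V) (a : V), List.Chain' A (a :: l) → w ∉ a :: l → A a w →
      ∃ l' : List V, List.Chain' A (a :: l') ∧ (a :: l') ~ w :: a :: l := by
  intro l
  induction l with
  | nil =>
    intro a hc hw haw
    exact ⟨[w], List.isChain_pair.2 haw, List.Perm.swap _ _ _⟩
  | cons b t ih =>
    intro a hc hw haw
    have hab : A a b := (List.isChain_cons_cons.1 hc).1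
    have hct : List.Chain' A (b :: t) := (List.isChain_cons_cons.1 hc).2
    have hwb : b ≠ w := by rintro rfl; exact hw (by simp)
    rcases h2 a b w hab haw hwb with hbw | hwb2
    · -- A b w : insert into tail by IH
      have hw' : w ∉ b :: t := fun h => hw (by simp [h])
      obtain ⟨t', ht'c, ht'p⟩ := ih b hct hw' hbw
      refine ⟨b :: t', List.isChain_cons_cons.2 ⟨hab, ht'c⟩, ?_⟩
      calc a :: b :: t' ~ a :: w :: b :: t := (ht'p.cons a)
        _ ~ w :: a :: b :: t := List.Perm.swap _ _ _
    · -- A w b : insert right after a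
      refine ⟨w :: b :: t, ?_, List.Perm.swap _ _ _⟩
      exact List.isChain_cons_cons.2 ⟨haw, List.isChain_cons_cons.2 ⟨hwb2, hct⟩⟩

/-- Extend a path by a vertex `w` with `A x w` for some `x` on the path. -/
lemma extend_out {V : Type*} (A : V → V → Prop)
    (h2 : ∀ v x y : V, A v x → A v y → x ≠ y → (A x y ∨ A y x))
    (w : V) (l : List V) (hc : List.Chain' A l) (hw : w ∉ l)
    (x : V) (hx : x ∈ l) (hxw : A x w) :
    ∃ l' : List V, List.Chain' A l' ∧ l' ~ w :: l := by
  obtain ⟨l1, l2, rfl⟩ := List.append_of_mem hx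
  rw [List.Chain', List.isChain_append] at hc
  obtain ⟨hc1, hc2, hc3⟩ := hc
  have hw2 : w ∉ x :: l2 := fun h => hw (by simp [List.mem_append.2 (Or.inr h)])
  obtain ⟨l2', hl2c, hl2p⟩ := fwd_insert A h2 w l2 x hc2 hw2 hxw
  refine ⟨l1 ++ x :: l2', ?_, ?_⟩
  · rw [List.Chain', List.isChain_append]
    exact ⟨hc1, hl2c, by simpa using hc3⟩
  · calc l1 ++ x :: l2' ~ l1 ++ (w :: x :: l2) := List.Perm.append_left l1 hl2p
      _ ~ w :: (l1 ++ x :: l2) := List.perm_middle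

/-- Extend a path by any vertex `w` adjacent (in either direction) to some `x` on it. -/
lemma extend_adj {V : Type*} (A : V → V → Prop) (hLT : IsLocalTournament A)
    (w : V) (l : List V) (hc : List.Chain' A l) (hw : w ∉ l)
    (x : V) (hx : x ∈ l) (hxw : A x w ∨ A w x) :
    ∃ l' : List V, List.Chain' A l' ∧ l' ~ w :: l := by
  obtain ⟨h0, h2, h3⟩ := hLT
  have h2' : ∀ v x y : V, A v x → A v y → x ≠ y → (A x y ∨ A y x) := by
    intro v x y hx hy hne
    by_cases h : A y x
    · exact Or.inr h
    · exact Or.inl ((h2 v x y hx hy hne).2 h)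
  rcases hxw with hxw | hwx
  · exact extend_out A h2' w l hc hw x hx hxw
  · have h3' : ∀ v x y : V, (flip A) v x → (flip A) v y → x ≠ y → ((flip A) x y ∨ (flip A) y x) := by
      intro v x y hx hy hne
      by_cases h : A y x
      · exact Or.inl h
      · exact Or.inr ((h3 v x y hx hy hne).2 h)
    have hcr : List.Chain' (flip A) l.reverse := by
      rw [List.Chain', List.isChain_reverse]; exact hc
    obtain ⟨l', hl'c, hl'p⟩ := extend_out (flip A) h3' w l.reverse hcr (by simpa using hw)
      x (by simpa using hx) hwx
    refine ⟨l'.reverse, ?_, ?_⟩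
    · rw [List.Chain', List.isChain_reverse]; simpa [List.Chain', Function.flip_def] using hl'c
    · calc l'.reverse ~ l' := (l'.reverse_perm)
        _ ~ w :: l.reverse := hl'p
        _ ~ w :: l := (l.reverse_perm).cons w

/-- If the underlying graph is connected and a nonempty list misses some vertex,
then some vertex off the list is adjacent to some vertex on the list. -/
lemma crossing {V : Type*} (A : V → V → Prop) (hconn : UConnected A)
    (l : List V) (v : V) (hv : v ∈ l) (u : V) (hu : u ∉ l) :
    ∃ w ∉ l, ∃ x ∈ l, A x w ∨ A w x := by
  have key : ∀ u, Relation.ReflTransGen (fun a b => A a b ∨ A b a) v u → u ∉ l →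
      ∃ w ∉ l, ∃ x ∈ l, A x w ∨ A w x := by
    intro u h
    induction h with
    | refl => intro h; exact absurd hv h
    | tail hb hstep ih =>
      rename_i b c
      intro hc
      by_cases hbl : b ∈ l
      · exact ⟨c, hc, b, hbl, hstep⟩
      · exact ih hbl
  exact key u (hconn v u) hu

/-- Every connected local tournament contains a Hamiltonian directed path. -/
theorem connected_localTournament_hamiltonian_path
    {V : Type*} [Fintype V] (A : V → V → Prop)
    (hLT : IsLocalTournament A) (hconn : UConnected A) :
    ∃ f : Fin (Fintype.card V) ≃ V,
      ∀ i : Fin (Fintype.card V), ∀ h : (i : ℕ) + 1 < Fintype.card V,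
        A (f i) (f ⟨(i : ℕ) + 1, h⟩) := by
  classical
  set n := Fintype.card V with hn
  rcases Nat.eq_zero_or_pos n with h0 | hpos
  · refine ⟨(Fintype.equivFin V).symm, ?_⟩
    intro i h
    omega
  -- there is a nodup directed path of every length from 1 up to n
  have step : ∀ k, 1 ≤ k → k ≤ n → ∃ l : List V, l.Nodup ∧ List.Chain' A l ∧ l.length = k := by
    intro k
    induction k with
    | zero => omega
    | succ k ih =>
      intro _ hk1
      rcases Nat.eq_zero_or_pos k with rfl | hkpos
      · -- length 1
        have : Nonempty V := Fintype.card_pos_iff.mp (by omega)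
        obtain ⟨v⟩ := this
        exact ⟨[v], by simp, List.isChain_singleton v, rfl⟩
      · obtain ⟨l, hnd, hc, hlen⟩ := ih hkpos (by omega)
        -- find a vertex off the list
        have hlt : l.length < n := by omega
        have hmiss : ∃ u, u ∉ l := by
          by_contra hall
          push_neg at hall
          have h1 : l.toFinset = Finset.univ := Finset.eq_univ_iff_forall.2 (by simpa using hall)
          have h2 : l.toFinset.card = l.length := List.toFinset_card_of_nodup hnd
          rw [h1, Finset.card_univ] at h2
          omega
        obtain ⟨u, hu⟩ := hmiss
        have hvl : ∃ v, v ∈ l := by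
          cases l with
          | nil => simp at hlen; omega
          | cons a t => exact ⟨a, by simp⟩
        obtain ⟨v, hv⟩ := hvl
        obtain ⟨w, hw, x, hx, hadj⟩ := crossing A hconn l v hv u hu
        obtain ⟨l', hl'c, hl'p⟩ := extend_adj A hLT w l hc hw x hx hadj
        refine ⟨l', hl'p.nodup_iff.2 (List.nodup_cons.2 ⟨hw, hnd⟩), hl'c, ?_⟩
        rw [hl'p.length_eq]
        simp [hlen]
  obtain ⟨l, hnd, hc, hlen⟩ := step n hpos le_rfl
  -- build the equivalence
  have hlen' : n = l.length := hlen.symm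
  set g : Fin n → V := fun i => l.get (Fin.cast hlen' i) with hg
  have hinj : Function.Injective g := by
    intro i j hij
    have := (List.nodup_iff_injective_get.mp hnd) hij
    exact Fin.cast_injective hlen' (by exact this)
  have hbij : Function.Bijective g := by
    rw [Fintype.bijective_iff_injective_and_card]
    exact ⟨hinj, by simp [hn]⟩
  refine ⟨Equiv.ofBijective g hbij, ?_⟩
  intro i h
  have hchain := List.isChain_iff_getElem.mp hc
  have hi : (i : ℕ) < l.length - 1 := by omega
  have := hchain i (by omega)
  simpa [hg, Equiv.ofBijective, Fin.cast] using this
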